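/- Fix 0 < q < 1 and let C_1 = C_1(q) be a positive integer large enough that q^{C_1}/(1-q) < 1/10. There exist constants A = A(q) > 1 and c = c(q) > 0 such that for every integer t ≥ C_1 and every real s ≥ 0, P_t(R_{C_1}^+ > 10t + s/2) ≤ A e^{-cs}, where R_{C_1}^+ = min{k > 0 : M_k ≤ C_1} is the first time the chain reaches level C_1 or below. -/

import Mathlib

open MeasureTheory
open scoped ENNReal

noncomputable section

/-- The chain `M_0 = m0`, `M_n = max (M_{n-1}, Z_n) - 1`. -/
def chainM (m0 : ℕ) (z : ℕ → ℕ) : ℕ → ℕ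
  | 0 => m0
  | n + 1 => max (chainM m0 z n) (z (n + 1)) - 1

/-- The first time `R_v^+ = min {k > 0 : M_k ≤ v}` the trajectory `M` reaches level `v`
or below, as an element of `ℝ≥0∞` (equal to `∞` if this never happens). -/
noncomputable def retTimeLe (M : ℕ → ℕ) (v : ℕ) : ℝ≥0∞ :=
  ⨅ (k : ℕ) (_ : 0 < k ∧ M k ≤ v), (k : ℝ≥0∞)

lemma chainM_succ (m0 : ℕ) (z : ℕ → ℕ) (n : ℕ) :
    chainM m0 z (n + 1) = max (chainM m0 z n) (z (n + 1)) - 1 := rfl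

lemma chainM_congr (m0 : ℕ) {z z' : ℕ → ℕ} :
    ∀ n, (∀ i, 1 ≤ i → i ≤ n → z i = z' i) → chainM m0 z n = chainM m0 z' n
  | 0, _ => rfl
  | n + 1, h => by
    rw [chainM_succ, chainM_succ,
      chainM_congr m0 n (fun i h1 h2 => h i h1 (h2.trans n.le_succ)),
      h (n + 1) (Nat.succ_le_succ (Nat.zero_le n)) le_rfl]

lemma measurable_chainM {Ω : Type*} [MeasurableSpace Ω] (m0 : ℕ) (Z : ℕ → Ω → ℕ)
    (hm : ∀ i, Measurable (Z i)) : ∀ n, Measurable fun ω => chainM m0 (fun i => Z i ω) n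
  | 0 => measurable_const
  | n + 1 => by
    have h1 := measurable_chainM m0 Z hm n
    exact (measurable_of_countable (fun p : ℕ × ℕ => max p.1 p.2 - 1)).comp
      (h1.prodMk (hm (n + 1)))

lemma one_step {Ω : Type*} [MeasurableSpace Ω] (P : Measure Ω)
    (q : ℝ) (hq0 : 0 < q) (hq1 : q < 1) (C₁ : ℕ) (hC₁pos : 1 ≤ C₁)
    (Zi : Ω → ℕ) (hpos : ∀ ω, 1 ≤ Zi ω)
    (hgeom : ∀ k, 1 ≤ k → P {ω | Zi ω = k} = ENNReal.ofReal ((1 - q) * q ^ (k - 1)))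
    (m : ℕ) (hm : C₁ ≤ m) :
    ∑' k : ℕ, (ENNReal.ofReal ((3 - q) / 2)) ^ (max m k - 1) * P {ω | Zi ω = k}
      ≤ ENNReal.ofReal ((1 + 2 * q ^ C₁) * (2 / (3 - q)))
        * (ENNReal.ofReal ((3 - q) / 2)) ^ m := by
  set lam : ℝ := (3 - q) / 2 with hlam_def
  set rho : ℝ := (1 + 2 * q ^ C₁) * (2 / (3 - q)) with hrho_def
  have hq1' : (0:ℝ) < 1 - q := by linarith
  have h3q : (0:ℝ) < 3 - q := by linarith
  have hlampos : 0 < lam := by rw [hlam_def]; positivity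
  have hlam1 : 1 ≤ lam := by rw [hlam_def]; rw [le_div_iff₀ (by norm_num)]; linarith
  have hlamq : lam * q < 1 := by
    rw [hlam_def]
    nlinarith [mul_pos hq1' (show (0:ℝ) < 2 - q by linarith)]
  have h1mq : 1 - lam * q = (1 - q) * (2 - q) / 2 := by rw [hlam_def]; ring
  obtain ⟨m', rfl⟩ : ∃ m', m = m' + 1 := ⟨m - 1, by omega⟩
  have hZ0 : P {ω | Zi ω = 0} = 0 := by
    have : {ω | Zi ω = 0} = ∅ := by
      ext ω; simp only [Set.mem_setOf_eq, Set.mem_empty_iff_false, iff_false]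
      have := hpos ω; omega
    simp [this]
  rw [tsum_eq_zero_add' ENNReal.summable]
  rw [hZ0, mul_zero, zero_add]
  set a : ℕ → ℝ := fun j => lam ^ (max (m' + 1) (j + 1) - 1) * ((1 - q) * q ^ j) with ha_def
  have hterm : ∀ j : ℕ,
      (ENNReal.ofReal lam) ^ (max (m' + 1) (j + 1) - 1) * P {ω | Zi ω = j + 1}
        = ENNReal.ofReal (a j) := by
    intro j
    rw [hgeom (j + 1) (by omega)]
    simp only [Nat.add_sub_cancel]
    rw [← ENNReal.ofReal_pow hlampos.le, ← ENNReal.ofReal_mul (by positivity)]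
  simp only [hterm]
  have hanonneg : ∀ j, 0 ≤ a j := fun j => by
    have h1 : (0:ℝ) ≤ lam ^ (max (m' + 1) (j + 1) - 1) := by positivity
    have h2 : (0:ℝ) ≤ (1 - q) * q ^ j := by positivity
    simp only [ha_def]; positivity
  have hsummable : Summable a := by
    have hb : Summable (fun j : ℕ => (1 - q) * lam ^ m' * (lam * q) ^ j) :=
      (summable_geometric_of_lt_one (by positivity) hlamq).mul_left _
    refine Summable.of_nonneg_of_le hanonneg (fun j => ?_) hb
    have hexp : max (m' + 1) (j + 1) - 1 ≤ m' + j := by omega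
    have h1 : lam ^ (max (m' + 1) (j + 1) - 1) ≤ lam ^ (m' + j) :=
      pow_le_pow_right₀ hlam1 hexp
    calc a j ≤ lam ^ (m' + j) * ((1 - q) * q ^ j) := by
            apply mul_le_mul_of_nonneg_right h1 (by positivity)
      _ = (1 - q) * lam ^ m' * (lam * q) ^ j := by rw [pow_add, mul_pow]; ring
  have htsum_le : ∑' j, a j ≤ rho * lam ^ (m' + 1) := by
    rw [← Summable.sum_add_tsum_nat_add (m' + 1) hsummable]
    have hhead : ∑ j ∈ Finset.range (m' + 1), a j ≤ lam ^ m' := by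
      have heq : ∀ j ∈ Finset.range (m' + 1), a j = lam ^ m' * (1 - q) * q ^ j := by
        intro j hj
        rw [Finset.mem_range] at hj
        have hmx : max (m' + 1) (j + 1) - 1 = m' := by omega
        simp only [ha_def, hmx]; ring
      rw [Finset.sum_congr rfl heq, ← Finset.mul_sum]
      have hgs : ∑ j ∈ Finset.range (m' + 1), q ^ j ≤ (1 - q)⁻¹ := by
        rw [← tsum_geometric_of_lt_one hq0.le hq1]
        exact Summable.sum_le_tsum _ (fun _ _ => by positivity)
          (summable_geometric_of_lt_one hq0.le hq1)
      calc lam ^ m' * (1 - q) * ∑ j ∈ Finset.range (m' + 1), q ^ j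
          ≤ lam ^ m' * (1 - q) * (1 - q)⁻¹ := by
            apply mul_le_mul_of_nonneg_left hgs (by positivity)
        _ = lam ^ m' := by field_simp
    have htail : ∑' j : ℕ, a (j + (m' + 1)) ≤ lam ^ m' * (q ^ C₁ * 2) := by
      have heq : ∀ j : ℕ, a (j + (m' + 1)) = ((1 - q) * (lam * q) ^ (m' + 1)) * (lam * q) ^ j := by
        intro j
        have hmx : max (m' + 1) (j + (m' + 1) + 1) - 1 = j + (m' + 1) := by omega
        simp only [ha_def, hmx]
        rw [mul_pow, mul_pow, pow_add, pow_add]; ring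
      rw [tsum_congr heq, tsum_mul_left,
        tsum_geometric_of_lt_one (by positivity) hlamq]
      have hq2 : (0:ℝ) < 2 - q := by linarith
      rw [h1mq]
      have e1 : (1 - q) * (lam * q) ^ (m' + 1) * ((1 - q) * (2 - q) / 2)⁻¹
          = lam ^ m' * (q ^ (m' + 1) * (2 * lam / (2 - q))) := by
        rw [mul_pow, pow_succ lam m']
        field_simp
      rw [e1]
      refine mul_le_mul_of_nonneg_left ?_ (by positivity)
      have hq3 : q ^ (m' + 1) ≤ q ^ C₁ := pow_le_pow_of_le_one hq0.le hq1.le hm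
      have hq4 : 2 * lam / (2 - q) ≤ 2 := by
        rw [div_le_iff₀ hq2, hlam_def]; linarith
      exact mul_le_mul hq3 hq4 (by positivity) (by positivity)
    have hrho_eq : rho * lam ^ (m' + 1) = lam ^ m' + lam ^ m' * (q ^ C₁ * 2) := by
      rw [hrho_def, hlam_def, pow_succ]
      field_simp
    rw [hrho_eq]
    exact add_le_add hhead htail
  calc ∑' j, ENNReal.ofReal (a j) = ENNReal.ofReal (∑' j, a j) :=
        (ENNReal.ofReal_tsum_of_nonneg hanonneg hsummable).symm
    _ ≤ ENNReal.ofReal (rho * lam ^ (m' + 1)) := ENNReal.ofReal_le_ofReal htsum_le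
    _ = ENNReal.ofReal rho * (ENNReal.ofReal lam) ^ (m' + 1) := by
        rw [ENNReal.ofReal_mul (by positivity), ENNReal.ofReal_pow hlampos.le]

lemma key_lemma {Ω : Type*} [MeasurableSpace Ω] (P : Measure Ω) [IsProbabilityMeasure P]
    (q : ℝ) (hq0 : 0 < q) (hq1 : q < 1)
    (Z : ℕ → Ω → ℕ)
    (hmeas : ∀ i, Measurable (Z i))
    (hindep : ProbabilityTheory.iIndepFun Z P)
    (hpos : ∀ i ω, 1 ≤ Z i ω)
    (hgeom : ∀ i k, 1 ≤ k →
      P {ω | Z i ω = k} = ENNReal.ofReal ((1 - q) * q ^ (k - 1)))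
    (C₁ : ℕ) (hC₁pos : 1 ≤ C₁) (t : ℕ) (ht : C₁ ≤ t) :
    ∀ m : ℕ,
      (∫⁻ ω, ({ω' : Ω | ∀ k, 1 ≤ k → k ≤ m → C₁ < chainM t (fun i => Z i ω') k}.indicator
          (fun _ => (1:ℝ≥0∞)) ω) * (ENNReal.ofReal ((3 - q) / 2)) ^ (chainM t (fun i => Z i ω) m) ∂P)
        ≤ (ENNReal.ofReal ((3 - q) / 2)) ^ t
            * (ENNReal.ofReal ((1 + 2 * q ^ C₁) * (2 / (3 - q)))) ^ m := by
  classical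
  set lam : ℝ := (3 - q) / 2 with hlam_def
  set L : ℝ≥0∞ := ENNReal.ofReal lam with hL_def
  set Yc : ℝ≥0∞ := ENNReal.ofReal ((1 + 2 * q ^ C₁) * (2 / (3 - q))) with hY_def
  set Mk : ℕ → Ω → ℕ := fun k ω => chainM t (fun i => Z i ω) k with hMk_def
  have hMmeas : ∀ k, Measurable (Mk k) := measurable_chainM t Z hmeas
  set E : ℕ → Set Ω := fun m => {ω' : Ω | ∀ k, 1 ≤ k → k ≤ m → C₁ < Mk k ω'} with hE_def
  have hEmeas : ∀ m, MeasurableSet (E m) := by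
    intro m
    have hEeq : E m = ⋂ (k : ℕ), ⋂ (_ : 1 ≤ k ∧ k ≤ m), (Mk k) ⁻¹' (Set.Ioi C₁) := by
      ext ω
      simp only [hE_def, Set.mem_setOf_eq, Set.mem_iInter, Set.mem_preimage, Set.mem_Ioi, and_imp]
    rw [hEeq]
    exact MeasurableSet.iInter fun k => MeasurableSet.iInter fun _ => (hMmeas k) trivial
  intro m
  induction m with
  | zero =>
    have hE0 : E 0 = Set.univ := by
      ext ω
      simp only [hE_def, Set.mem_setOf_eq, Set.mem_univ, iff_true]
      intro k h1 h2; omega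
    have hpt : ∀ ω : Ω, (E 0).indicator (fun _ => (1:ℝ≥0∞)) ω * L ^ (Mk 0 ω) = L ^ t := by
      intro ω
      rw [hE0, Set.indicator_univ, one_mul]
      rfl
    calc (∫⁻ ω, (E 0).indicator (fun _ => (1:ℝ≥0∞)) ω * L ^ (Mk 0 ω) ∂P)
        = ∫⁻ _, L ^ t ∂P := lintegral_congr hpt
      _ = L ^ t := by simp
      _ ≤ L ^ t * Yc ^ 0 := by simp
  | succ m ih =>
    have hEsub : E (m + 1) ⊆ E m := fun ω h k h1 h2 => h k h1 (h2.trans (Nat.le_succ m))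
    have hFmeas : ∀ k : ℕ, Measurable fun ω =>
        (E m).indicator (fun _ => (1:ℝ≥0∞)) ω * L ^ (max (Mk m ω) k - 1) := by
      intro k
      exact (measurable_const.indicator (hEmeas m)).mul
        ((measurable_from_nat (f := fun j : ℕ => L ^ (max j k - 1))).comp (hMmeas m))
    have hGmeas : ∀ k : ℕ, Measurable ((Z (m + 1) ⁻¹' {k}).indicator (fun _ => (1:ℝ≥0∞))) := by
      intro k
      exact measurable_const.indicator ((hmeas (m + 1)) trivial)
    have hind : ∀ k : ℕ,
        (∫⁻ ω, ((E m).indicator (fun _ => (1:ℝ≥0∞)) ω * L ^ (max (Mk m ω) k - 1))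
            * (Z (m + 1) ⁻¹' {k}).indicator (fun _ => (1:ℝ≥0∞)) ω ∂P)
          = (∫⁻ ω, (E m).indicator (fun _ => (1:ℝ≥0∞)) ω * L ^ (max (Mk m ω) k - 1) ∂P)
              * P {ω | Z (m + 1) ω = k} := by
      intro k
      set S : Finset ℕ := Finset.Icc 1 m with hS_def
      have hdisj : Disjoint S ({m + 1} : Finset ℕ) := by
        rw [Finset.disjoint_singleton_right, hS_def, Finset.mem_Icc]
        omega
      have hbase := hindep.indepFun_finset S {m + 1} hdisj hmeas
      set z' : (↥S → ℕ) → ℕ → ℕ := fun v i => if h : i ∈ S then v ⟨i, h⟩ else 0 with hz'_def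
      set φ : (↥S → ℕ) → ℝ≥0∞ := fun v =>
        ({v' : ↥S → ℕ | ∀ j, 1 ≤ j → j ≤ m → C₁ < chainM t (z' v') j}.indicator
          (fun _ => (1:ℝ≥0∞)) v) * L ^ (max (chainM t (z' v) m) k - 1) with hφ_def
      set ψ : (↥({m + 1} : Finset ℕ) → ℕ) → ℝ≥0∞ := fun v =>
        {v' : ↥({m + 1} : Finset ℕ) → ℕ |
          v' ⟨m + 1, Finset.mem_singleton_self _⟩ = k}.indicator (fun _ => (1:ℝ≥0∞)) v with hψ_def
      have hφm : Measurable φ := measurable_of_countable _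
      have hψm : Measurable ψ := measurable_of_countable _
      have hcomp := ProbabilityTheory.IndepFun.comp hbase hφm hψm
      have hchain : ∀ (ω : Ω), ∀ j ≤ m, chainM t (z' (fun i : ↥S => Z i ω)) j = Mk j ω := by
        intro ω j hj
        refine chainM_congr t j (fun i h1 h2 => ?_)
        simp only [hz'_def]
        rw [dif_pos (by rw [hS_def, Finset.mem_Icc]; exact ⟨h1, h2.trans hj⟩)]
      have hleft : (φ ∘ fun ω (i : ↥S) => Z i ω)
          = fun ω => (E m).indicator (fun _ => (1:ℝ≥0∞)) ω * L ^ (max (Mk m ω) k - 1) := by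
        funext ω
        simp only [Function.comp_apply, hφ_def]
        rw [hchain ω m le_rfl]
        congr 1
        by_cases hω : ω ∈ E m
        · rw [Set.indicator_of_mem hω, Set.indicator_of_mem]
          intro j h1 h2
          rw [hchain ω j h2]
          exact hω j h1 h2
        · rw [Set.indicator_of_notMem hω, Set.indicator_of_notMem]
          intro hv
          exact hω (fun j h1 h2 => by rw [← hchain ω j h2]; exact hv j h1 h2)
      have hright : (ψ ∘ fun ω (i : ↥({m + 1} : Finset ℕ)) => Z i ω)
          = (Z (m + 1) ⁻¹' {k}).indicator (fun _ => (1:ℝ≥0∞)) := by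
        funext ω
        simp only [Function.comp_apply, hψ_def, Set.indicator_apply, Set.mem_setOf_eq,
          Set.mem_preimage, Set.mem_singleton_iff]
      rw [hleft, hright] at hcomp
      rw [ProbabilityTheory.lintegral_mul_eq_lintegral_mul_lintegral_of_indepFun''
        (hFmeas k).aemeasurable (hGmeas k).aemeasurable hcomp]
      congr 1
      rw [show ((Z (m + 1) ⁻¹' {k}).indicator (fun _ => (1:ℝ≥0∞)))
          = (Z (m + 1) ⁻¹' {k}).indicator 1 from rfl,
        lintegral_indicator_one ((hmeas (m + 1)) trivial)]
      rfl
    calc (∫⁻ ω, (E (m + 1)).indicator (fun _ => (1:ℝ≥0∞)) ω * L ^ (Mk (m + 1) ω) ∂P)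
        ≤ ∫⁻ ω, (E m).indicator (fun _ => (1:ℝ≥0∞)) ω
            * L ^ (max (Mk m ω) (Z (m + 1) ω) - 1) ∂P := by
          refine lintegral_mono fun ω => ?_
          have h1 : (E (m + 1)).indicator (fun _ => (1:ℝ≥0∞)) ω
              ≤ (E m).indicator (fun _ => (1:ℝ≥0∞)) ω :=
            Set.indicator_le_indicator_of_subset hEsub (fun _ => zero_le_one) ω
          have h2 : Mk (m + 1) ω = max (Mk m ω) (Z (m + 1) ω) - 1 := rfl
          rw [h2]
          exact mul_le_mul_left h1 _
      _ = ∑' k : ℕ, ∫⁻ ω, ((E m).indicator (fun _ => (1:ℝ≥0∞)) ω * L ^ (max (Mk m ω) k - 1))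
            * (Z (m + 1) ⁻¹' {k}).indicator (fun _ => (1:ℝ≥0∞)) ω ∂P := by
          rw [← lintegral_tsum (fun k => ((hFmeas k).fun_mul (hGmeas k)).aemeasurable)]
          refine lintegral_congr fun ω => ?_
          have h0 : ∀ b : ℕ, b ≠ Z (m + 1) ω →
              ((E m).indicator (fun _ => (1:ℝ≥0∞)) ω * L ^ (max (Mk m ω) b - 1))
                * (Z (m + 1) ⁻¹' {b}).indicator (fun _ => (1:ℝ≥0∞)) ω = 0 := by
            intro b hb
            rw [Set.indicator_of_notMem (show ω ∉ Z (m + 1) ⁻¹' {b} from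
              fun h => hb (Set.mem_singleton_iff.mp h).symm), mul_zero]
          rw [tsum_eq_single (Z (m + 1) ω) h0]
          rw [Set.indicator_of_mem (show ω ∈ Z (m + 1) ⁻¹' {Z (m + 1) ω} from rfl), mul_one]
      _ = ∑' k : ℕ, (∫⁻ ω, (E m).indicator (fun _ => (1:ℝ≥0∞)) ω * L ^ (max (Mk m ω) k - 1) ∂P)
            * P {ω | Z (m + 1) ω = k} := tsum_congr hind
      _ = ∫⁻ ω, ∑' k : ℕ, ((E m).indicator (fun _ => (1:ℝ≥0∞)) ω * L ^ (max (Mk m ω) k - 1))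
            * P {ω' | Z (m + 1) ω' = k} ∂P := by
          rw [lintegral_tsum (fun k => ((hFmeas k).mul_const _).aemeasurable)]
          exact tsum_congr fun k => (lintegral_mul_const _ (hFmeas k)).symm
      _ = ∫⁻ ω, (E m).indicator (fun _ => (1:ℝ≥0∞)) ω
            * ∑' k : ℕ, L ^ (max (Mk m ω) k - 1) * P {ω' | Z (m + 1) ω' = k} ∂P := by
          refine lintegral_congr fun ω => ?_
          rw [← ENNReal.tsum_mul_left]
          exact tsum_congr fun k => mul_assoc _ _ _
      _ ≤ ∫⁻ ω, (E m).indicator (fun _ => (1:ℝ≥0∞)) ω * (Yc * L ^ (Mk m ω)) ∂P := by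
          refine lintegral_mono fun ω => ?_
          by_cases hω : ω ∈ E m
          · rw [Set.indicator_of_mem hω, one_mul, one_mul]
            have hCm : C₁ ≤ Mk m ω := by
              rcases Nat.eq_zero_or_pos m with hm0 | hm0
              · subst hm0; exact ht
              · exact le_of_lt (hω m hm0 le_rfl)
            exact one_step P q hq0 hq1 C₁ hC₁pos (Z (m + 1)) (hpos (m + 1)) (hgeom (m + 1))
              (Mk m ω) hCm
          · rw [Set.indicator_of_notMem hω, zero_mul, zero_mul]
      _ = Yc * ∫⁻ ω, (E m).indicator (fun _ => (1:ℝ≥0∞)) ω * L ^ (Mk m ω) ∂P := by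
          have hXm : Measurable fun ω => (E m).indicator (fun _ => (1:ℝ≥0∞)) ω * L ^ (Mk m ω) :=
            (measurable_const.indicator (hEmeas m)).mul
              ((measurable_from_nat (f := fun j : ℕ => L ^ j)).comp (hMmeas m))
          rw [← lintegral_const_mul Yc hXm]
          exact lintegral_congr fun ω => by ring
      _ ≤ Yc * (L ^ t * Yc ^ m) := mul_le_mul_right ih Yc
      _ = L ^ t * Yc ^ (m + 1) := by ring

/-- **Exponential tail for the passage time down to level `C₁`.** Fix `0 < q < 1` and a
positive integer `C₁` with `q^{C₁}/(1-q) < 1/10`. There are constants `A > 1`, `c > 0`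
such that for every integer `t ≥ C₁` and real `s ≥ 0`,
`P_t(R_{C₁}^+ > 10 t + s/2) ≤ A e^{-c s}`. -/
theorem passage_time_exponential_tail
    {Ω : Type*} [MeasurableSpace Ω] (P : Measure Ω) [IsProbabilityMeasure P]
    (q : ℝ) (hq0 : 0 < q) (hq1 : q < 1)
    (Z : ℕ → Ω → ℕ)
    (hmeas : ∀ i, Measurable (Z i))
    (hindep : ProbabilityTheory.iIndepFun Z P)
    (hpos : ∀ i ω, 1 ≤ Z i ω)
    (hgeom : ∀ i k, 1 ≤ k →
      P {ω | Z i ω = k} = ENNReal.ofReal ((1 - q) * q ^ (k - 1)))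
    (C₁ : ℕ) (hC₁pos : 1 ≤ C₁) (hC₁ : q ^ C₁ / (1 - q) < 1 / 10) :
    ∃ A > (1 : ℝ), ∃ c > (0 : ℝ), ∀ t : ℕ, C₁ ≤ t → ∀ s : ℝ, 0 ≤ s →
      P {ω | ENNReal.ofReal (10 * t + s / 2)
          < retTimeLe (chainM t (fun n => Z n ω)) C₁}
        ≤ ENNReal.ofReal (A * Real.exp (-c * s)) := by
  classical
  have hq1' : (0:ℝ) < 1 - q := by linarith
  have h3q : (0:ℝ) < 3 - q := by linarith
  set lam : ℝ := (3 - q) / 2 with hlam_def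
  set rho : ℝ := (1 + 2 * q ^ C₁) * (2 / (3 - q)) with hrho_def
  have hqC : q ^ C₁ < (1 - q) / 10 := by
    rw [div_lt_div_iff₀ hq1' (by norm_num : (0:ℝ) < 10)] at hC₁
    linarith
  have hqCpos : (0:ℝ) < q ^ C₁ := pow_pos hq0 _
  have hlampos : 0 < lam := by rw [hlam_def]; positivity
  have hlam1 : 1 < lam := by rw [hlam_def, lt_div_iff₀ (by norm_num : (0:ℝ) < 2)]; linarith
  have hrho_pos : 0 < rho := by
    rw [hrho_def]
    have h : (0:ℝ) < 2 / (3 - q) := by positivity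
    nlinarith
  have hrholam : rho * lam = 1 + 2 * q ^ C₁ := by
    rw [hrho_def, hlam_def]
    field_simp
  have hrho1 : rho < 1 := by
    rw [hrho_def, mul_comm, div_mul_eq_mul_div, div_lt_one h3q]
    linarith
  have hlamrho : lam * rho ^ 10 ≤ 1 := by
    set x : ℝ := 1 - q with hx_def
    have hx0 : 0 < x := hq1'
    have hlam_eq : lam = 1 + x / 2 := by rw [hlam_def, hx_def]; ring
    have h2 : (1 + x / 5) ^ 2 ≤ lam := by rw [hlam_eq]; nlinarith
    have hrho_le : rho ≤ (1 + x / 5) / lam := by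
      rw [le_div_iff₀ hlampos, hrholam]
      have : 2 * q ^ C₁ ≤ x / 5 := by rw [hx_def]; linarith
      linarith
    calc lam * rho ^ 10 ≤ lam * ((1 + x / 5) / lam) ^ 10 :=
          mul_le_mul_of_nonneg_left (pow_le_pow_left₀ hrho_pos.le hrho_le 10) hlampos.le
      _ = (1 + x / 5) ^ 10 / lam ^ 9 := by
          rw [div_pow]
          field_simp
      _ ≤ 1 := by
          rw [div_le_one (by positivity)]
          calc (1 + x / 5) ^ 10 = ((1 + x / 5) ^ 2) ^ 5 := by ring
            _ ≤ lam ^ 5 := pow_le_pow_left₀ (by positivity) h2 5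
            _ ≤ lam ^ 9 := pow_le_pow_right₀ hlam1.le (by norm_num)
  have hlogneg : Real.log rho < 0 := Real.log_neg hrho_pos hrho1
  refine ⟨rho⁻¹, one_lt_inv₀ hrho_pos |>.mpr hrho1, -(Real.log rho) / 2, by linarith, ?_⟩
  intro t ht s hs
  set n : ℕ := ⌊10 * (t:ℝ) + s / 2⌋₊ with hn_def
  have hsub : {ω | ENNReal.ofReal (10 * t + s / 2) < retTimeLe (chainM t (fun i => Z i ω)) C₁}
      ⊆ {ω' : Ω | ∀ k, 1 ≤ k → k ≤ n → C₁ < chainM t (fun i => Z i ω') k} := by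
    intro ω hω k h1 h2
    by_contra hc
    push_neg at hc
    have hle : retTimeLe (chainM t (fun i => Z i ω)) C₁ ≤ (k : ℝ≥0∞) := iInf₂_le k ⟨h1, hc⟩
    have hk : ((k:ℕ):ℝ≥0∞) ≤ ENNReal.ofReal (10 * t + s / 2) := by
      rw [← ENNReal.ofReal_natCast k]
      apply ENNReal.ofReal_le_ofReal
      calc (k:ℝ) ≤ (n:ℝ) := by exact_mod_cast h2
        _ ≤ 10 * t + s / 2 := by rw [hn_def]; exact Nat.floor_le (by positivity)
    have hmem : ENNReal.ofReal (10 * t + s / 2) < ENNReal.ofReal (10 * t + s / 2) :=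
      lt_of_lt_of_le (lt_of_lt_of_le hω hle) hk
    exact absurd hmem (lt_irrefl _)
  set E : Set Ω := {ω' : Ω | ∀ k, 1 ≤ k → k ≤ n → C₁ < chainM t (fun i => Z i ω') k} with hE_def
  have hMmeas := measurable_chainM t Z hmeas
  have hEmeas : MeasurableSet E := by
    have hEeq : E = ⋂ (k : ℕ), ⋂ (_ : 1 ≤ k ∧ k ≤ n),
        (fun ω => chainM t (fun i => Z i ω) k) ⁻¹' (Set.Ioi C₁) := by
      ext ω
      simp only [hE_def, Set.mem_setOf_eq, Set.mem_iInter, Set.mem_preimage, Set.mem_Ioi, and_imp]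
    rw [hEeq]
    exact MeasurableSet.iInter fun k => MeasurableSet.iInter fun _ => (hMmeas k) trivial
  have hPE : P E ≤ (ENNReal.ofReal lam) ^ t * (ENNReal.ofReal rho) ^ n := by
    have h1 : P E = ∫⁻ ω, E.indicator (fun _ => (1:ℝ≥0∞)) ω ∂P := by
      rw [show E.indicator (fun _ => (1:ℝ≥0∞)) = E.indicator 1 from rfl,
        lintegral_indicator_one hEmeas]
    rw [h1]
    calc (∫⁻ ω, E.indicator (fun _ => (1:ℝ≥0∞)) ω ∂P)
        ≤ ∫⁻ ω, E.indicator (fun _ => (1:ℝ≥0∞)) ω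
            * (ENNReal.ofReal lam) ^ (chainM t (fun i => Z i ω) n) ∂P := by
          refine lintegral_mono fun ω => ?_
          have hL1 : (1:ℝ≥0∞) ≤ (ENNReal.ofReal lam) ^ (chainM t (fun i => Z i ω) n) :=
            one_le_pow_of_one_le' (ENNReal.one_le_ofReal.mpr hlam1.le) _
          calc E.indicator (fun _ => (1:ℝ≥0∞)) ω
              = E.indicator (fun _ => (1:ℝ≥0∞)) ω * 1 := (mul_one _).symm
            _ ≤ _ := mul_le_mul_right hL1 _
      _ ≤ (ENNReal.ofReal lam) ^ t * (ENNReal.ofReal rho) ^ n := by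
          have hkey := key_lemma P q hq0 hq1 Z hmeas hindep hpos hgeom C₁ hC₁pos t ht n
          rw [← hlam_def, ← hrho_def] at hkey
          exact hkey
  have hmain : (ENNReal.ofReal lam) ^ t * (ENNReal.ofReal rho) ^ n
      ≤ ENNReal.ofReal (rho⁻¹ * Real.exp (-(-(Real.log rho) / 2) * s)) := by
    rw [← ENNReal.ofReal_pow hlampos.le, ← ENNReal.ofReal_pow hrho_pos.le,
      ← ENNReal.ofReal_mul (pow_nonneg hlampos.le t)]
    apply ENNReal.ofReal_le_ofReal
    have hexp : Real.exp (-(-(Real.log rho) / 2) * s) = rho ^ (s / 2 : ℝ) := by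
      rw [Real.rpow_def_of_pos hrho_pos]
      congr 1
      ring
    rw [hexp]
    have hb1 : ((10 * t : ℕ) : ℝ) ≤ 10 * (t:ℝ) + s / 2 := by push_cast; linarith
    have hge : 10 * (t:ℝ) + s / 2 - 1 ≤ (n:ℝ) := by
      have hf := Nat.lt_floor_add_one (10 * (t:ℝ) + s / 2)
      rw [← hn_def] at hf
      linarith
    have hsplit : rho ^ n ≤ rho ^ (10 * t) * (rho ^ (s / 2 : ℝ) * rho⁻¹) := by
      have h1 : rho ^ ((n:ℕ):ℝ) ≤ rho ^ (10 * (t:ℝ) + s / 2 - 1) :=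
        Real.rpow_le_rpow_of_exponent_ge hrho_pos hrho1.le hge
      rw [← Real.rpow_natCast rho n]
      calc rho ^ ((n:ℕ):ℝ) ≤ rho ^ (10 * (t:ℝ) + s / 2 - 1) := h1
        _ = rho ^ (((10 * t : ℕ):ℝ)) * rho ^ (s / 2 : ℝ) * rho ^ (-1 : ℝ) := by
            rw [← Real.rpow_add hrho_pos, ← Real.rpow_add hrho_pos]
            congr 1
            push_cast
            ring
        _ = rho ^ (10 * t) * (rho ^ (s / 2 : ℝ) * rho⁻¹) := by
            rw [Real.rpow_natCast, Real.rpow_neg_one, mul_assoc]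
    have hrps : (0:ℝ) ≤ rho ^ (s / 2 : ℝ) * rho⁻¹ :=
      mul_nonneg (Real.rpow_nonneg hrho_pos.le _) (inv_nonneg.mpr hrho_pos.le)
    calc lam ^ t * rho ^ n
        ≤ lam ^ t * (rho ^ (10 * t) * (rho ^ (s / 2 : ℝ) * rho⁻¹)) :=
          mul_le_mul_of_nonneg_left hsplit (pow_nonneg hlampos.le t)
      _ = (lam * rho ^ 10) ^ t * (rho ^ (s / 2 : ℝ) * rho⁻¹) := by
          rw [pow_mul, ← mul_assoc, ← mul_pow]
      _ ≤ 1 ^ t * (rho ^ (s / 2 : ℝ) * rho⁻¹) :=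
          mul_le_mul_of_nonneg_right (pow_le_pow_left₀ (by positivity) hlamrho t) hrps
      _ = rho⁻¹ * rho ^ (s / 2 : ℝ) := by rw [one_pow, one_mul, mul_comm]
  calc P {ω | ENNReal.ofReal (10 * t + s / 2) < retTimeLe (chainM t (fun i => Z i ω)) C₁}
      ≤ P E := measure_mono hsub
    _ ≤ (ENNReal.ofReal lam) ^ t * (ENNReal.ofReal rho) ^ n := hPE
    _ ≤ ENNReal.ofReal (rho⁻¹ * Real.exp (-(-(Real.log rho) / 2) * s)) := hmain

end
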